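/- Fix n ≥ 1 and a matrix s ∈ M_n(ℂ). Let P_s := { g ∈ GL(n,ℂ) : t ↦ exp(t s)·g·exp(−t s) is bounded on [0,∞) } and R_s := { g ∈ GL(n,ℂ) : exp(t s)·g·exp(−t s) → 1 as t → ∞ }. Then R_s is a normal subgroup of P_s: R_s is contained in P_s, R_s is a subgroup, and for every g ∈ P_s and r ∈ R_s one has g·r·g^{-1} ∈ R_s. -/

import Mathlib

set_option maxHeartbeats 1000000


open NormedSpace Filter

/-- For `s ∈ M_n(ℂ)`, let
`P_s = { g ∈ GL(n,ℂ) : t ↦ exp(ts)·g·exp(-ts) is bounded on [0,∞) }` and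
`R_s = { g ∈ GL(n,ℂ) : exp(ts)·g·exp(-ts) → 1 as t → ∞ }`. Then `R_s` is a
normal subgroup of `P_s`: `R_s ⊆ P_s`, `R_s` is a subgroup, and `P_s` normalizes
`R_s`. -/
theorem radical_normal_in_parabolic (n : ℕ) (hn : 1 ≤ n)
    (s : Matrix (Fin n) (Fin n) ℂ) :
    let P : Set (Matrix.GeneralLinearGroup (Fin n) ℂ) :=
      { g | ∃ M : ℝ, ∀ t : ℝ, 0 ≤ t → ∀ i j : Fin n,
        ‖(exp ((t : ℂ) • s) * (g : Matrix (Fin n) (Fin n) ℂ) *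
          exp (-((t : ℂ) • s))) i j‖ ≤ M }
    let R : Set (Matrix.GeneralLinearGroup (Fin n) ℂ) :=
      { g | Tendsto (fun t : ℝ => exp ((t : ℂ) • s) *
          (g : Matrix (Fin n) (Fin n) ℂ) * exp (-((t : ℂ) • s)))
        atTop (nhds (1 : Matrix (Fin n) (Fin n) ℂ)) }
    R ⊆ P ∧
    ((1 : Matrix.GeneralLinearGroup (Fin n) ℂ) ∈ R ∧
      (∀ g h : Matrix.GeneralLinearGroup (Fin n) ℂ, g ∈ R → h ∈ R → g * h ∈ R) ∧
      (∀ g : Matrix.GeneralLinearGroup (Fin n) ℂ, g ∈ R → g⁻¹ ∈ R)) ∧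
    (∀ g : Matrix.GeneralLinearGroup (Fin n) ℂ, g ∈ P →
      ∀ r : Matrix.GeneralLinearGroup (Fin n) ℂ, r ∈ R → g * r * g⁻¹ ∈ R) := by
  intro P R
  letI : NormedRing (Matrix (Fin n) (Fin n) ℂ) := Matrix.linftyOpNormedRing
  letI : NormedAlgebra ℂ (Matrix (Fin n) (Fin n) ℂ) := Matrix.linftyOpNormedAlgebra
  -- basic exponential cancellation
  have h1 : ∀ t : ℝ, exp ((t:ℂ)•s) * exp (-((t:ℂ)•s)) = 1 := by
    intro t
    rw [← Matrix.exp_add_of_commute ((t:ℂ)•s) (-((t:ℂ)•s)) ((Commute.refl _).neg_right), add_neg_cancel, exp_zero]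
  have h2 : ∀ t : ℝ, exp (-((t:ℂ)•s)) * exp ((t:ℂ)•s) = 1 := by
    intro t
    rw [← Matrix.exp_add_of_commute (-((t:ℂ)•s)) ((t:ℂ)•s) ((Commute.refl _).neg_left), neg_add_cancel, exp_zero]
  have hmul : ∀ (t : ℝ) (A B : (Matrix (Fin n) (Fin n) ℂ)),
      exp ((t:ℂ)•s) * (A * B) * exp (-((t:ℂ)•s)) =
        (exp ((t:ℂ)•s) * A * exp (-((t:ℂ)•s))) *
          (exp ((t:ℂ)•s) * B * exp (-((t:ℂ)•s))) := by
    intro t A B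
    have cancel : ∀ X : (Matrix (Fin n) (Fin n) ℂ), exp (-((t:ℂ)•s)) * (exp ((t:ℂ)•s) * X) = X := fun X => by
      rw [← mul_assoc, h2, one_mul]
    simp only [mul_assoc, cancel]
  -- continuity in t
  have hcont : ∀ g : Matrix.GeneralLinearGroup (Fin n) ℂ, Continuous (fun t : ℝ =>
      exp ((t:ℂ)•s) * (g : (Matrix (Fin n) (Fin n) ℂ)) * exp (-((t:ℂ)•s))) := by
    intro g
    letI : NormedAlgebra ℚ (Matrix (Fin n) (Fin n) ℂ) := NormedAlgebra.restrictScalars ℚ ℂ _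
    have he : Continuous (fun t : ℝ => exp ((t:ℂ)•s)) :=
      exp_continuous.comp ((Complex.continuous_ofReal).smul continuous_const)
    have he' : Continuous (fun t : ℝ => exp (-((t:ℂ)•s))) :=
      exp_continuous.comp (((Complex.continuous_ofReal).smul continuous_const).neg)
    exact (he.mul continuous_const).mul he'
  -- entrywise bounds vs norm
  have entry_le : ∀ (A : (Matrix (Fin n) (Fin n) ℂ)) (i j : Fin n), ‖A i j‖ ≤ ‖A‖ := by
    intro A i j
    rw [Matrix.linfty_opNorm_def]
    calc ‖A i j‖ ≤ ∑ j', ‖A i j'‖ :=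
          Finset.single_le_sum (fun _ _ => norm_nonneg _) (Finset.mem_univ j)
      _ = ((∑ j', ‖A i j'‖₊ : NNReal) : ℝ) := by push_cast; rfl
      _ ≤ _ := NNReal.coe_le_coe.2 (Finset.le_sup (f := fun i => ∑ j, ‖A i j‖₊) (Finset.mem_univ i))
  have norm_le_sum : ∀ A : (Matrix (Fin n) (Fin n) ℂ), ‖A‖ ≤ ∑ i, ∑ j, ‖A i j‖ := by
    intro A
    rw [Matrix.linfty_opNorm_def]
    have h : (Finset.univ.sup fun i => ∑ j, ‖A i j‖₊) ≤ ∑ i, ∑ j, ‖A i j‖₊ :=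
      Finset.sup_le fun i _ => Finset.single_le_sum (f := fun i => ∑ j, ‖A i j‖₊) (fun _ _ => zero_le) (Finset.mem_univ i)
    calc ((Finset.univ.sup fun i => ∑ j, ‖A i j‖₊ : NNReal) : ℝ)
        ≤ ((∑ i, ∑ j, ‖A i j‖₊ : NNReal) : ℝ) := NNReal.coe_le_coe.2 h
      _ = ∑ i, ∑ j, ‖A i j‖ := by push_cast; rfl
  -- the key formula for the conjugate of the inverse
  have key : ∀ (g : Matrix.GeneralLinearGroup (Fin n) ℂ) (t : ℝ),
      exp ((t:ℂ)•s) * ((g⁻¹ : Matrix.GeneralLinearGroup (Fin n) ℂ) : (Matrix (Fin n) (Fin n) ℂ)) * exp (-((t:ℂ)•s)) =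
        Ring.inverse ((exp ((t:ℂ)•s) * (g : (Matrix (Fin n) (Fin n) ℂ)) * exp (-((t:ℂ)•s))).det) •
          (exp ((t:ℂ)•s) * (g : (Matrix (Fin n) (Fin n) ℂ)) * exp (-((t:ℂ)•s))).adjugate := by
    intro g t
    have hprod : (exp ((t:ℂ)•s) * (g : (Matrix (Fin n) (Fin n) ℂ)) * exp (-((t:ℂ)•s))) *
        (exp ((t:ℂ)•s) * ((g⁻¹ : Matrix.GeneralLinearGroup (Fin n) ℂ) : (Matrix (Fin n) (Fin n) ℂ)) *
          exp (-((t:ℂ)•s))) = 1 := by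
      rw [← hmul]
      simp only [Units.mul_inv, mul_one, h1]
    rw [← Matrix.inv_eq_right_inv hprod, Matrix.inv_def]
  -- R ⊆ P
  have hRP : R ⊆ P := by
    intro g hg
    have hn0 : Tendsto (fun t : ℝ => ‖exp ((t:ℂ)•s) * (g : (Matrix (Fin n) (Fin n) ℂ)) * exp (-((t:ℂ)•s)) - 1‖)
        atTop (nhds 0) := tendsto_iff_norm_sub_tendsto_zero.mp hg
    obtain ⟨T, hT⟩ := eventually_atTop.mp (hn0.eventually (eventually_le_nhds one_pos))
    obtain ⟨Mzero, hMzero⟩ := (isCompact_Icc (a := (0:ℝ)) (b := T)).exists_bound_of_continuousOn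
      (hcont g).continuousOn
    refine ⟨max Mzero (‖(1:(Matrix (Fin n) (Fin n) ℂ))‖ + 1), fun t ht i j => ?_⟩
    refine (entry_le _ i j).trans ?_
    rcases le_total t T with h | h
    · exact le_max_of_le_left (hMzero t ⟨ht, h⟩)
    · refine le_max_of_le_right ?_
      calc ‖exp ((t:ℂ)•s) * (g : (Matrix (Fin n) (Fin n) ℂ)) * exp (-((t:ℂ)•s))‖
          ≤ ‖exp ((t:ℂ)•s) * (g : (Matrix (Fin n) (Fin n) ℂ)) * exp (-((t:ℂ)•s)) - 1‖ + ‖(1:(Matrix (Fin n) (Fin n) ℂ))‖ := by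
            have hna := norm_add_le (exp ((t:ℂ)•s) * (g : (Matrix (Fin n) (Fin n) ℂ)) * exp (-((t:ℂ)•s)) - 1) (1 : (Matrix (Fin n) (Fin n) ℂ))
            rwa [sub_add_cancel] at hna
        _ ≤ ‖(1:(Matrix (Fin n) (Fin n) ℂ))‖ + 1 := by have := hT t h; linarith
  refine ⟨hRP, ⟨?_, ?_, ?_⟩, ?_⟩
  · -- 1 ∈ R
    show Tendsto _ atTop _
    simp only [Units.val_one, mul_one, h1]
    exact tendsto_const_nhds
  · -- products
    intro g h hg hh
    show Tendsto _ atTop _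
    have := hg.mul hh
    rw [one_mul] at this
    simp only [Units.val_mul]
    have heq : (fun t : ℝ => exp ((t:ℂ)•s) * ((g : (Matrix (Fin n) (Fin n) ℂ)) * (h : (Matrix (Fin n) (Fin n) ℂ))) * exp (-((t:ℂ)•s))) =
        fun t : ℝ => (exp ((t:ℂ)•s) * (g : (Matrix (Fin n) (Fin n) ℂ)) * exp (-((t:ℂ)•s))) *
          (exp ((t:ℂ)•s) * (h : (Matrix (Fin n) (Fin n) ℂ)) * exp (-((t:ℂ)•s))) := funext fun t => hmul t _ _
    rw [heq]
    exact this
  · -- inverses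
    intro g hg
    show Tendsto _ atTop _
    have hdet : Tendsto (fun t : ℝ =>
        (exp ((t:ℂ)•s) * (g : (Matrix (Fin n) (Fin n) ℂ)) * exp (-((t:ℂ)•s))).det) atTop (nhds 1) := by
      have := ((Continuous.matrix_det (continuous_id : Continuous (id : (Matrix (Fin n) (Fin n) ℂ) → (Matrix (Fin n) (Fin n) ℂ)))).tendsto 1).comp hg
      simp only [id_eq, Matrix.det_one] at this
      exact this
    have hadj : Tendsto (fun t : ℝ =>
        (exp ((t:ℂ)•s) * (g : (Matrix (Fin n) (Fin n) ℂ)) * exp (-((t:ℂ)•s))).adjugate) atTop (nhds 1) := by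
      have := ((Continuous.matrix_adjugate (continuous_id : Continuous (id : (Matrix (Fin n) (Fin n) ℂ) → (Matrix (Fin n) (Fin n) ℂ)))).tendsto 1).comp hg
      simp only [id_eq, Matrix.adjugate_one] at this
      exact this
    have heq : (fun t : ℝ => exp ((t:ℂ)•s) *
        ((g⁻¹ : Matrix.GeneralLinearGroup (Fin n) ℂ) : (Matrix (Fin n) (Fin n) ℂ)) * exp (-((t:ℂ)•s))) =
        fun t : ℝ => Ring.inverse ((exp ((t:ℂ)•s) * (g : (Matrix (Fin n) (Fin n) ℂ)) * exp (-((t:ℂ)•s))).det) •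
          (exp ((t:ℂ)•s) * (g : (Matrix (Fin n) (Fin n) ℂ)) * exp (-((t:ℂ)•s))).adjugate := funext fun t => key g t
    rw [heq]
    simp only [Ring.inverse_eq_inv']
    have := (hdet.inv₀ one_ne_zero).smul hadj
    simpa using this
  · -- normality
    intro g hg r hr
    obtain ⟨C, hC⟩ := hg
    have i0 : Fin n := ⟨0, hn⟩
    have hC0 : (0:ℝ) ≤ C := le_trans (norm_nonneg _) (hC 0 le_rfl i0 i0)
    set B1 : ℝ := (n : ℝ)^2 * C with hB1def
    have hB1 : (0:ℝ) ≤ B1 := by positivity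
    have hgbd : ∀ t : ℝ, 0 ≤ t → ‖exp ((t:ℂ)•s) * (g : (Matrix (Fin n) (Fin n) ℂ)) * exp (-((t:ℂ)•s))‖ ≤ B1 := by
      intro t ht
      refine (norm_le_sum _).trans ?_
      have : ∀ i j : Fin n, ‖(exp ((t:ℂ)•s) * (g : (Matrix (Fin n) (Fin n) ℂ)) * exp (-((t:ℂ)•s))) i j‖ ≤ C := by
        intro i j
        exact hC t ht i j
      calc (∑ i, ∑ j : Fin n, ‖(exp ((t:ℂ)•s) * (g : (Matrix (Fin n) (Fin n) ℂ)) * exp (-((t:ℂ)•s))) i j‖)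
          ≤ ∑ _i : Fin n, ∑ _j : Fin n, C :=
            Finset.sum_le_sum fun i _ => Finset.sum_le_sum fun j _ => this i j
        _ = (n : ℝ)^2 * C := by simp [Finset.sum_const]; ring
    obtain ⟨B2, hB2⟩ := (isCompact_closedBall (0:(Matrix (Fin n) (Fin n) ℂ)) B1).exists_bound_of_continuousOn
      (Continuous.matrix_adjugate (continuous_id : Continuous (id : (Matrix (Fin n) (Fin n) ℂ) → (Matrix (Fin n) (Fin n) ℂ)))).continuousOn
    set D : ℝ := ‖Ring.inverse ((exp ((0:ℝ):ℂ)•s * (g:(Matrix (Fin n) (Fin n) ℂ))).det)‖ with hDdef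
    -- bound on conjugate of g⁻¹
    have hginvbd : ∀ t : ℝ, 0 ≤ t →
        ‖exp ((t:ℂ)•s) * ((g⁻¹ : Matrix.GeneralLinearGroup (Fin n) ℂ) : (Matrix (Fin n) (Fin n) ℂ)) *
          exp (-((t:ℂ)•s))‖ ≤ ‖Ring.inverse ((g : (Matrix (Fin n) (Fin n) ℂ)).det)‖ * B2 := by
      intro t ht
      rw [key g t]
      have hdet : (exp ((t:ℂ)•s) * (g : (Matrix (Fin n) (Fin n) ℂ)) * exp (-((t:ℂ)•s))).det = (g : (Matrix (Fin n) (Fin n) ℂ)).det := by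
        rw [Matrix.det_mul, Matrix.det_mul]
        have h3 : (exp ((t:ℂ)•s)).det * (exp (-((t:ℂ)•s))).det = 1 := by
          rw [← Matrix.det_mul, h1 t, Matrix.det_one]
        calc (exp ((t:ℂ)•s)).det * (g : (Matrix (Fin n) (Fin n) ℂ)).det * (exp (-((t:ℂ)•s))).det
            = ((exp ((t:ℂ)•s)).det * (exp (-((t:ℂ)•s))).det) * (g : (Matrix (Fin n) (Fin n) ℂ)).det := by ring
          _ = (g : (Matrix (Fin n) (Fin n) ℂ)).det := by rw [h3, one_mul]
      rw [hdet, norm_smul]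
      have hmem : exp ((t:ℂ)•s) * (g : (Matrix (Fin n) (Fin n) ℂ)) * exp (-((t:ℂ)•s)) ∈ Metric.closedBall (0:(Matrix (Fin n) (Fin n) ℂ)) B1 :=
        mem_closedBall_zero_iff.mpr (hgbd t ht)
      exact mul_le_mul_of_nonneg_left (hB2 _ hmem) (norm_nonneg _)
    -- expansion of the conjugated product
    show Tendsto _ atTop _
    refine tendsto_iff_norm_sub_tendsto_zero.mpr ?_
    have hrn : Tendsto (fun t : ℝ => ‖exp ((t:ℂ)•s) * (r : (Matrix (Fin n) (Fin n) ℂ)) * exp (-((t:ℂ)•s)) - 1‖)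
        atTop (nhds 0) := tendsto_iff_norm_sub_tendsto_zero.mp hr
    have expand : ∀ t : ℝ,
        exp ((t:ℂ)•s) * ((g * r * g⁻¹ : Matrix.GeneralLinearGroup (Fin n) ℂ) : (Matrix (Fin n) (Fin n) ℂ)) *
          exp (-((t:ℂ)•s)) - 1 =
        (exp ((t:ℂ)•s) * (g : (Matrix (Fin n) (Fin n) ℂ)) * exp (-((t:ℂ)•s))) *
          (exp ((t:ℂ)•s) * (r : (Matrix (Fin n) (Fin n) ℂ)) * exp (-((t:ℂ)•s)) - 1) *
          (exp ((t:ℂ)•s) * ((g⁻¹ : Matrix.GeneralLinearGroup (Fin n) ℂ) : (Matrix (Fin n) (Fin n) ℂ)) *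
            exp (-((t:ℂ)•s))) := by
      intro t
      have e1 : exp ((t:ℂ)•s) * ((g * r * g⁻¹ : Matrix.GeneralLinearGroup (Fin n) ℂ) : (Matrix (Fin n) (Fin n) ℂ)) *
          exp (-((t:ℂ)•s)) =
          (exp ((t:ℂ)•s) * (g : (Matrix (Fin n) (Fin n) ℂ)) * exp (-((t:ℂ)•s))) *
          (exp ((t:ℂ)•s) * (r : (Matrix (Fin n) (Fin n) ℂ)) * exp (-((t:ℂ)•s))) *
          (exp ((t:ℂ)•s) * ((g⁻¹ : Matrix.GeneralLinearGroup (Fin n) ℂ) : (Matrix (Fin n) (Fin n) ℂ)) *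
            exp (-((t:ℂ)•s))) := by
        simp only [Units.val_mul]
        rw [hmul, hmul]
      have e2 : (exp ((t:ℂ)•s) * (g : (Matrix (Fin n) (Fin n) ℂ)) * exp (-((t:ℂ)•s))) *
          (exp ((t:ℂ)•s) * ((g⁻¹ : Matrix.GeneralLinearGroup (Fin n) ℂ) : (Matrix (Fin n) (Fin n) ℂ)) *
            exp (-((t:ℂ)•s))) = 1 := by
        rw [← hmul]
        simp only [Units.mul_inv, mul_one, h1]
      rw [e1]
      rw [mul_sub, sub_mul, mul_one]
      rw [e2]
    refine squeeze_zero' (g := fun t : ℝ => (B1 * ‖exp ((t:ℂ)•s) * (r : (Matrix (Fin n) (Fin n) ℂ)) * exp (-((t:ℂ)•s)) - 1‖) * (‖Ring.inverse ((g : (Matrix (Fin n) (Fin n) ℂ)).det)‖ * B2))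
      (Eventually.of_forall fun t => norm_nonneg _)
      (eventually_atTop.mpr ⟨0, fun t ht => ?_⟩) ?_
    · rw [expand t]
      calc ‖(exp ((t:ℂ)•s) * (g : (Matrix (Fin n) (Fin n) ℂ)) * exp (-((t:ℂ)•s))) *
            (exp ((t:ℂ)•s) * (r : (Matrix (Fin n) (Fin n) ℂ)) * exp (-((t:ℂ)•s)) - 1) *
            (exp ((t:ℂ)•s) * ((g⁻¹ : Matrix.GeneralLinearGroup (Fin n) ℂ) : (Matrix (Fin n) (Fin n) ℂ)) *
              exp (-((t:ℂ)•s)))‖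
          ≤ ‖(exp ((t:ℂ)•s) * (g : (Matrix (Fin n) (Fin n) ℂ)) * exp (-((t:ℂ)•s))) *
            (exp ((t:ℂ)•s) * (r : (Matrix (Fin n) (Fin n) ℂ)) * exp (-((t:ℂ)•s)) - 1)‖ *
            ‖exp ((t:ℂ)•s) * ((g⁻¹ : Matrix.GeneralLinearGroup (Fin n) ℂ) : (Matrix (Fin n) (Fin n) ℂ)) *
              exp (-((t:ℂ)•s))‖ := norm_mul_le _ _
        _ ≤ (‖exp ((t:ℂ)•s) * (g : (Matrix (Fin n) (Fin n) ℂ)) * exp (-((t:ℂ)•s))‖ *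
            ‖exp ((t:ℂ)•s) * (r : (Matrix (Fin n) (Fin n) ℂ)) * exp (-((t:ℂ)•s)) - 1‖) *
            ‖exp ((t:ℂ)•s) * ((g⁻¹ : Matrix.GeneralLinearGroup (Fin n) ℂ) : (Matrix (Fin n) (Fin n) ℂ)) *
              exp (-((t:ℂ)•s))‖ :=
            mul_le_mul_of_nonneg_right (norm_mul_le _ _) (norm_nonneg _)
        _ ≤ (B1 * ‖exp ((t:ℂ)•s) * (r : (Matrix (Fin n) (Fin n) ℂ)) * exp (-((t:ℂ)•s)) - 1‖) *
            (‖Ring.inverse ((g : (Matrix (Fin n) (Fin n) ℂ)).det)‖ * B2) := by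
            refine mul_le_mul (mul_le_mul_of_nonneg_right (hgbd t ht) (norm_nonneg _))
              (hginvbd t ht) (norm_nonneg _) (by positivity)
    · have := (hrn.const_mul B1).mul_const (‖Ring.inverse ((g : (Matrix (Fin n) (Fin n) ℂ)).det)‖ * B2)
      simpa using this
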